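/- Let χ_1,…,χ_n : μ_d → ℂ* be multiplicative characters such that none of χ_1,…,χ_n and the product χ_1⋯χ_n is trivial. Then j(χ_1,…,χ_n) is an algebraic number, and every complex root of its minimal polynomial over ℚ has absolute value q^{(n−1)/2} (i.e., j(χ_1,…,χ_n) is a q-Weil number of weight n−1). -/

import Mathlib

open scoped BigOperators

noncomputable section

namespace MotivicGJ

variable {κ : Type} [Field κ] [Fintype κ] [DecidableEq κ]

/-- The map `κˣ → μ_d`, `m ↦ m ^ ((q - 1) / d)`, where `q = |κ|`. -/
def toMu (d : ℕ) (hd : d ∣ Fintype.card κ - 1) (m : κˣ) : rootsOfUnity d κ :=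
  ⟨m ^ ((Fintype.card κ - 1) / d), by
    rw [mem_rootsOfUnity, ← pow_mul, Nat.div_mul_cancel hd, ← Fintype.card_units]
    exact pow_card_eq_one⟩

/-- The Gauss sum `g(ψ, χ) = -∑_{m ∈ κˣ} ψ(m) χ(m^((q-1)/d))`. -/
def gSum (d : ℕ) (hd : d ∣ Fintype.card κ - 1) (ψ : AddChar κ ℂ)
    (χ : rootsOfUnity d κ →* ℂˣ) : ℂ :=
  - ∑ m : κˣ, ψ (m : κ) * (χ (toMu d hd m) : ℂ)

/-- The Jacobi sum `j(χ₁, …, χₙ)`. -/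
def jSum (d : ℕ) (hd : d ∣ Fintype.card κ - 1) {n : ℕ}
    (χ : Fin n → (rootsOfUnity d κ →* ℂˣ)) : ℂ :=
  (-1 : ℂ) ^ (n - 1) *
    ∑ m ∈ Finset.univ.filter (fun m : Fin n → κˣ => (∑ i, (m i : κ)) = 1),
      ∏ i, (χ i (toMu d hd (m i)) : ℂ)

/-- The conjugate (inverse) additive character `ψ̄(a) = ψ(-a)`. -/
def conjAddChar (ψ : AddChar κ ℂ) : AddChar κ ℂ where
  toFun a := ψ (-a)
  map_zero_eq_one' := by (try simp only []); rw [neg_zero]; exact ψ.map_zero_eq_one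
  map_add_eq_mul' a b := by (try simp only []); rw [neg_add]; exact ψ.map_add_eq_mul _ _

/-- `toMu` as a monoid hom. -/
def toMuHom (d : ℕ) (hd : d ∣ Fintype.card κ - 1) : κˣ →* rootsOfUnity d κ where
  toFun := toMu d hd
  map_one' := Subtype.ext (one_pow _)
  map_mul' a b := Subtype.ext (mul_pow a b _)

lemma toMu_surjective (d : ℕ) (hd0 : 0 < d) (hd : d ∣ Fintype.card κ - 1) :
    Function.Surjective (toMu d hd) := by
  obtain ⟨g, hg⟩ := IsCyclic.exists_generator (α := κˣ)
  intro y
  obtain ⟨k, hk⟩ := hg (y : κˣ)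
  set e : ℕ := (Fintype.card κ - 1) / d with he
  have hed : e * d = Fintype.card κ - 1 := Nat.div_mul_cancel hd
  have hord : orderOf g = Fintype.card κ - 1 := by
    rw [orderOf_eq_card_of_forall_mem_zpowers hg, Nat.card_eq_fintype_card, Fintype.card_units]
  have hyd : (y : κˣ) ^ d = 1 := by
    have := y.2; rwa [mem_rootsOfUnity] at this
  have h1 : g ^ (k * (d : ℤ)) = 1 := by
    rw [zpow_mul]; simp only [] at hk; rw [hk]; exact_mod_cast hyd
  have h2 : ((Fintype.card κ - 1 : ℕ) : ℤ) ∣ k * d := by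
    rw [← hord]; exact orderOf_dvd_iff_zpow_eq_one.mpr h1
  have h3 : (e : ℤ) * d ∣ k * d := by rwa [← Nat.cast_mul, hed]
  have h4 : (e : ℤ) ∣ k :=
    (mul_dvd_mul_iff_right (by exact_mod_cast hd0.ne' : (d : ℤ) ≠ 0)).mp h3
  obtain ⟨t, ht⟩ := h4
  refine ⟨g ^ t, Subtype.ext ?_⟩
  show (g ^ t) ^ e = (y : κˣ)
  simp only [] at hk
  rw [← zpow_natCast (g ^ t) e, ← zpow_mul, mul_comm, ← ht, hk]


lemma char_pow_d_eq_one {d : ℕ} (ν : rootsOfUnity d κ →* ℂˣ) (x : rootsOfUnity d κ) :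
    ((ν x : ℂˣ) : ℂ) ^ d = 1 := by
  have hx : x ^ d = 1 := by
    apply Subtype.ext
    have := x.2; rw [mem_rootsOfUnity] at this
    exact_mod_cast this
  calc ((ν x : ℂˣ) : ℂ) ^ d = ((ν (x ^ d) : ℂˣ) : ℂ) := by rw [map_pow]; push_cast; ring
  _ = 1 := by rw [hx, map_one, Units.val_one]

lemma abs_char_val {d : ℕ} (hd0 : 0 < d) (ν : rootsOfUnity d κ →* ℂˣ) (x : rootsOfUnity d κ) :
    ‖((ν x : ℂˣ) : ℂ)‖ = 1 := by
  have h := char_pow_d_eq_one ν x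
  have h2 : ‖((ν x : ℂˣ) : ℂ)‖ ^ d = 1 := by
    rw [← norm_pow, h, norm_one]
  have h3 : (0:ℝ) ≤ ‖((ν x : ℂˣ) : ℂ)‖ := norm_nonneg _
  rcases pow_eq_one_iff_cases.mp h2 with h' | h' | h'
  · omega
  · exact h'
  · exfalso; rw [h'.1] at h3; norm_num at h3


lemma sum_units_eq {f : κ → ℂ} (h0 : f 0 = 0) : ∑ a : κ, f a = ∑ u : κˣ, f u := by
  classical
  have h1 : ∑ u : κˣ, f u = ∑ x : {a : κ // a ≠ 0}, f x :=
    Equiv.sum_comp unitsEquivNeZero (fun x : {a : κ // a ≠ 0} => f x)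
  rw [h1, ← Finset.sum_subtype (Finset.univ.filter (· ≠ 0)) (by simp) f]
  rw [← Finset.sum_filter_add_sum_filter_not Finset.univ (· ≠ 0) f]
  have h2 : Finset.filter (fun x => ¬ x ≠ 0) Finset.univ = ({0} : Finset κ) := by ext; simp
  rw [h2, Finset.sum_singleton, h0, add_zero]


/-- The multiplicative character of `κ` obtained from a character of `μ_d`. -/
def charM (d : ℕ) (hd : d ∣ Fintype.card κ - 1) (ν : rootsOfUnity d κ →* ℂˣ) : MulChar κ ℂ :=
  MulChar.ofUnitHom (ν.comp (toMuHom d hd))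

lemma charM_coe (d : ℕ) (hd : d ∣ Fintype.card κ - 1) (ν : rootsOfUnity d κ →* ℂˣ) (u : κˣ) :
    charM d hd ν (u : κ) = ((ν (toMu d hd u) : ℂˣ) : ℂ) :=
  MulChar.ofUnitHom_coe _ _

lemma charM_ne_one (d : ℕ) (hd0 : 0 < d) (hd : d ∣ Fintype.card κ - 1)
    {ν : rootsOfUnity d κ →* ℂˣ} (hν : ν ≠ 1) : charM d hd ν ≠ 1 := by
  rw [MulChar.ne_one_iff]
  have : ∃ x, ν x ≠ 1 := by
    by_contra h
    push_neg at h
    exact hν (MonoidHom.ext fun x => h x)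
  obtain ⟨x, hx⟩ := this
  obtain ⟨u, hu⟩ := toMu_surjective d hd0 hd x
  refine ⟨u, ?_⟩
  rw [charM_coe, hu]
  intro h
  exact hx (Units.ext h)

lemma gSum_eq (d : ℕ) (hd : d ∣ Fintype.card κ - 1) (ψ : AddChar κ ℂ)
    (ν : rootsOfUnity d κ →* ℂˣ) : gSum d hd ψ ν = - gaussSum (charM d hd ν) ψ := by
  rw [gaussSum, sum_units_eq (by rw [MulChar.map_nonunit _ not_isUnit_zero, zero_mul])]
  unfold gSum
  congr 1
  refine Finset.sum_congr rfl fun u _ => ?_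
  rw [charM_coe, mul_comm]

lemma ringChar_pos : 0 < ringChar κ :=
  Nat.pos_of_ne_zero (CharP.ringChar_ne_zero_of_finite κ)

lemma conj_gaussSum (d : ℕ) (hd0 : 0 < d) (hd : d ∣ Fintype.card κ - 1)
    (ν : rootsOfUnity d κ →* ℂˣ) (ψ : AddChar κ ℂ) :
    (starRingEnd ℂ) (gaussSum (charM d hd ν) ψ) = gaussSum (charM d hd ν)⁻¹ ψ⁻¹ := by
  rw [gaussSum, gaussSum, map_sum]
  refine Finset.sum_congr rfl fun a _ => ?_
  rw [map_mul]
  congr 1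
  · rw [MulChar.inv_apply_eq_inv']
    rcases eq_or_ne a 0 with rfl | ha
    · rw [MulChar.map_nonunit _ not_isUnit_zero, inv_zero, map_zero]
    · set u := Units.mk0 a ha with hu
      have ha' : a = (u : κ) := rfl
      rw [ha', charM_coe]
      exact (Complex.inv_eq_conj (abs_char_val hd0 ν (toMu d hd u))).symm
  · exact (AddChar.starComp_apply (ringChar_pos (κ := κ)) a)

lemma abs_gaussSum (d : ℕ) (hd0 : 0 < d) (hd : d ∣ Fintype.card κ - 1)
    {ν : rootsOfUnity d κ →* ℂˣ} (hν : ν ≠ 1) {ψ : AddChar κ ℂ} (hψ : ψ.IsPrimitive) :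
    ‖gaussSum (charM d hd ν) ψ‖ = Real.sqrt (Fintype.card κ) := by
  have key := gaussSum_mul_gaussSum_eq_card (charM_ne_one d hd0 hd hν) hψ
  rw [← conj_gaussSum d hd0 hd, Complex.mul_conj] at key
  have h2 : Complex.normSq (gaussSum (charM d hd ν) ψ) = (Fintype.card κ : ℝ) := by
    exact_mod_cast key
  rw [Complex.norm_def, h2]


lemma addChar_map_sum {ι : Type*} (ψ : AddChar κ ℂ) (s : Finset ι) (f : ι → κ) :
    ψ (∑ i ∈ s, f i) = ∏ i ∈ s, ψ (f i) := by
  classical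
  induction s using Finset.cons_induction with
  | empty => simp
  | cons a s ha ih => rw [Finset.sum_cons, Finset.prod_cons, AddChar.map_add_eq_mul, ih]

lemma prod_gSum (d : ℕ) (hd0 : 0 < d) (hd : d ∣ Fintype.card κ - 1) (ψ : AddChar κ ℂ)
    {n : ℕ} (χ : Fin n → (rootsOfUnity d κ →* ℂˣ)) (hprod : (∏ i, χ i) ≠ 1) :
    ∏ i, gSum d hd ψ (χ i) = gSum d hd ψ (∏ i, χ i) * jSum d hd χ := by
  classical
  have hn : n ≠ 0 := by
    rintro rfl
    exact hprod (by simp [Finset.univ_eq_empty])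
  set c : Fin n → κˣ → ℂ := fun i u => ((χ i (toMu d hd u) : ℂˣ) : ℂ) with hc
  set P : (Fin n → κˣ) → ℂ := fun m => ∏ i, c i (m i) with hP
  set T : κ → ℂ := fun s =>
    ∑ m ∈ Finset.univ.filter (fun m : Fin n → κˣ => (∑ i, (m i : κ)) = s), P m with hT
  -- (1) product of character values
  have hcprod : ∀ u : κˣ, ∏ i, c i u = (((∏ i, χ i) (toMu d hd u) : ℂˣ) : ℂ) := by
    intro u
    rw [MonoidHom.finset_prod_apply]
    exact (map_prod (Units.coeHom ℂ) _ _).symm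
  -- (2) scaling
  have hscale : ∀ (t : κˣ) (s : κ), T ((t : κ) * s) = (∏ i, c i t) * T s := by
    intro t s
    rw [hT]
    simp only []
    rw [Finset.mul_sum]
    refine Finset.sum_nbij' (fun m => fun i => t⁻¹ * m i) (fun m => fun i => t * m i)
      ?_ ?_ ?_ ?_ ?_
    · intro m hm
      rw [Finset.mem_filter] at hm ⊢
      refine ⟨Finset.mem_univ _, ?_⟩
      have : ∑ i, ((t⁻¹ * m i : κˣ) : κ) = (t⁻¹ : κˣ) * ∑ i, ((m i : κˣ) : κ) := by
        rw [Finset.mul_sum]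
        exact Finset.sum_congr rfl fun i _ => by rw [Units.val_mul]
      rw [this, hm.2]
      field_simp
      rw [Units.inv_mul, one_mul]
    · intro m hm
      rw [Finset.mem_filter] at hm ⊢
      refine ⟨Finset.mem_univ _, ?_⟩
      have : ∑ i, ((t * m i : κˣ) : κ) = (t : κ) * ∑ i, ((m i : κˣ) : κ) := by
        rw [Finset.mul_sum]
        exact Finset.sum_congr rfl fun i _ => by rw [Units.val_mul]
      rw [this, hm.2]
    · intro m _; funext i; show t * (t⁻¹ * m i) = m i; rw [mul_inv_cancel_left]
    · intro m _; funext i; show t⁻¹ * (t * m i) = m i; rw [inv_mul_cancel_left]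
    · intro m hm
      rw [hP]
      simp only []
      rw [← Finset.prod_mul_distrib]
      refine Finset.prod_congr rfl fun i _ => ?_
      have : toMu d hd (t * (t⁻¹ * m i)) = toMu d hd t * toMu d hd (t⁻¹ * m i) :=
        map_mul (toMuHom d hd) _ _
      rw [hc]
      simp only []
      conv_lhs => rw [show m i = t * (t⁻¹ * m i) from (mul_inv_cancel_left t (m i)).symm, this]
      rw [map_mul, Units.val_mul]
  -- (3) T 0 = 0
  have hT0 : T 0 = 0 := by
    have : ∃ x, (∏ i, χ i) x ≠ 1 := by
      by_contra h
      push_neg at h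
      exact hprod (MonoidHom.ext fun x => h x)
    obtain ⟨x, hx⟩ := this
    obtain ⟨t, ht⟩ := toMu_surjective d hd0 hd x
    have h1 : T 0 = (∏ i, c i t) * T 0 := by
      have := hscale t 0
      rwa [mul_zero] at this
    have h2 : (∏ i, c i t) ≠ 1 := by
      rw [hcprod, ht]
      intro h
      exact hx (Units.ext h)
    have h3 : ((∏ i, c i t) - 1) * T 0 = 0 := by rw [sub_mul, one_mul, ← h1]; ring
    rcases mul_eq_zero.mp h3 with h | h
    · exact absurd (sub_eq_zero.mp h) h2
    · exact h
  -- (4) expand the product of Gauss sums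
  have hexp : ∏ i, gSum d hd ψ (χ i) =
      (-1 : ℂ) ^ n * ∑ m : Fin n → κˣ, ψ (∑ i, ((m i : κˣ) : κ)) * P m := by
    have h1 : ∀ i, gSum d hd ψ (χ i) = (-1) * ∑ u : κˣ, ψ (u : κ) * c i u := by
      intro i; rw [gSum]; ring_nf; rfl
    rw [Finset.prod_congr rfl fun i _ => h1 i, Finset.prod_mul_distrib, Finset.prod_const,
      Finset.card_univ, Fintype.card_fin]
    congr 1
    rw [Finset.prod_univ_sum]
    rw [Fintype.piFinset_univ]
    refine Finset.sum_congr rfl fun m _ => ?_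
    rw [Finset.prod_mul_distrib, addChar_map_sum ψ Finset.univ (fun i => ((m i : κˣ) : κ))]
  -- (5) fiber the sum over s = ∑ m i
  have hfib : ∑ m : Fin n → κˣ, ψ (∑ i, ((m i : κˣ) : κ)) * P m = ∑ s : κ, ψ s * T s := by
    have ht := Finset.sum_fiberwise_eq_sum_filter Finset.univ Finset.univ
      (fun m : Fin n → κˣ => ∑ i, ((m i : κˣ) : κ)) (fun m => ψ (∑ i, ((m i : κˣ) : κ)) * P m)
    simp only [Finset.mem_univ, Finset.filter_true] at ht
    rw [← ht]
    refine Finset.sum_congr rfl fun s _ => ?_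
    rw [hT]
    simp only []
    rw [Finset.mul_sum]
    refine Finset.sum_congr rfl fun m hm => ?_
    rw [(Finset.mem_filter.mp hm).2]
  -- (6) assemble
  have hmain : ∑ s : κ, ψ s * T s = (- gSum d hd ψ (∏ i, χ i)) * T 1 := by
    rw [sum_units_eq (by rw [hT0, mul_zero])]
    rw [gSum, neg_neg, Finset.sum_mul]
    refine Finset.sum_congr rfl fun u _ => ?_
    have : T (u : κ) = (∏ i, c i u) * T 1 := by
      have := hscale u 1
      rwa [mul_one] at this
    rw [this, hcprod, mul_assoc]
  have hj : jSum d hd χ = (-1 : ℂ) ^ (n - 1) * T 1 := rfl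
  obtain ⟨k, rfl⟩ : ∃ k, n = k + 1 := ⟨n - 1, (Nat.succ_pred_eq_of_pos (Nat.pos_of_ne_zero hn)).symm⟩
  rw [hexp, hfib, hmain, hj]
  simp only [Nat.add_sub_cancel]
  ring

lemma abs_jSum (d : ℕ) (hd0 : 0 < d) (hd : d ∣ Fintype.card κ - 1)
    {n : ℕ} (χ : Fin n → (rootsOfUnity d κ →* ℂˣ))
    (h1 : ∀ i, χ i ≠ 1) (hprod : (∏ i, χ i) ≠ 1) :
    ‖jSum d hd χ‖ = (Fintype.card κ : ℝ) ^ (((n : ℝ) - 1) / 2) := by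
  classical
  have hn : n ≠ 0 := by
    rintro rfl
    exact hprod (by simp [Finset.univ_eq_empty])
  set ψ := AddChar.FiniteField.primitiveChar_to_Complex κ with hψdef
  have hψ : ψ.IsPrimitive := AddChar.FiniteField.primitiveChar_to_Complex_isPrimitive κ
  have hqpos : (0:ℝ) < (Fintype.card κ : ℝ) := by exact_mod_cast Fintype.card_pos
  have habsg : ∀ ν : rootsOfUnity d κ →* ℂˣ, ν ≠ 1 →
      ‖gSum d hd ψ ν‖ = Real.sqrt (Fintype.card κ) := by
    intro ν hν
    rw [gSum_eq, norm_neg]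
    exact abs_gaussSum d hd0 hd hν hψ
  have hs0 : Real.sqrt (Fintype.card κ) ≠ 0 := by positivity
  have hid := congrArg (norm : ℂ → ℝ) (prod_gSum d hd0 hd ψ χ hprod)
  rw [norm_mul, norm_prod, habsg _ hprod,
    Finset.prod_congr rfl (fun i _ => habsg (χ i) (h1 i)), Finset.prod_const,
    Finset.card_univ, Fintype.card_fin] at hid
  obtain ⟨k, rfl⟩ : ∃ k, n = k + 1 :=
    ⟨n - 1, (Nat.succ_pred_eq_of_pos (Nat.pos_of_ne_zero hn)).symm⟩
  rw [pow_succ, mul_comm (Real.sqrt _ ^ k)] at hid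
  have habsj : ‖jSum d hd χ‖ = Real.sqrt (Fintype.card κ) ^ k :=
    mul_left_cancel₀ hs0 hid.symm
  rw [habsj, Real.sqrt_eq_rpow, ← Real.rpow_natCast ((Fintype.card κ : ℝ) ^ ((1:ℝ)/2)) k,
    ← Real.rpow_mul hqpos.le]
  congr 1
  push_cast
  ring


lemma char_val_isIntegral (d : ℕ) (hd0 : 0 < d) (ν : rootsOfUnity d κ →* ℂˣ)
    (x : rootsOfUnity d κ) : IsIntegral ℚ ((ν x : ℂˣ) : ℂ) := by
  refine ⟨Polynomial.X ^ d - Polynomial.C 1, Polynomial.monic_X_pow_sub_C 1 hd0.ne', ?_⟩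
  simp only [Polynomial.eval₂_sub, Polynomial.eval₂_pow, Polynomial.eval₂_X, Polynomial.eval₂_C,
    Polynomial.eval₂_one, map_one, char_pow_d_eq_one ν x, sub_self]

/-- Transport of a character along an embedding of a subfield of `ℂ` containing its values. -/
def pushChar {d : ℕ} (K : IntermediateField ℚ ℂ) (σ : K →+* ℂ)
    (ν : rootsOfUnity d κ →* ℂˣ) (h : ∀ x, ((ν x : ℂˣ) : ℂ) ∈ K) :
    rootsOfUnity d κ →* ℂˣ where
  toFun x := Units.mk0 (σ ⟨((ν x : ℂˣ) : ℂ), h x⟩)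
    (by
      rw [map_ne_zero]
      intro hc
      rw [Subtype.ext_iff] at hc
      exact Units.ne_zero (ν x) hc)
  map_one' := by
    ext
    show σ ⟨((ν 1 : ℂˣ) : ℂ), _⟩ = 1
    have h1 : (⟨((ν 1 : ℂˣ) : ℂ), h 1⟩ : K) = 1 :=
      Subtype.ext (show ((ν 1 : ℂˣ) : ℂ) = 1 by rw [map_one, Units.val_one])
    rw [h1, map_one]
  map_mul' x y := by
    ext
    show σ ⟨((ν (x * y) : ℂˣ) : ℂ), _⟩ = σ ⟨((ν x : ℂˣ) : ℂ), _⟩ * σ ⟨((ν y : ℂˣ) : ℂ), _⟩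
    rw [← map_mul σ]
    congr 1
    exact Subtype.ext (show ((ν (x * y) : ℂˣ) : ℂ)
      = ((ν x : ℂˣ) : ℂ) * ((ν y : ℂˣ) : ℂ) by rw [map_mul, Units.val_mul])

lemma pushChar_ne_one {d : ℕ} (K : IntermediateField ℚ ℂ) (σ : K →+* ℂ)
    {ν : rootsOfUnity d κ →* ℂˣ} (h : ∀ x, ((ν x : ℂˣ) : ℂ) ∈ K) (hν : ν ≠ 1) :
    pushChar K σ ν h ≠ 1 := by
  intro hc
  apply hν
  ext x
  have h1 : pushChar K σ ν h x = 1 := by rw [hc]; rfl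
  have h2 : σ ⟨((ν x : ℂˣ) : ℂ), h x⟩ = 1 := by
    have := congrArg (Units.val) h1
    exact this
  rw [← map_one σ] at h2
  have h3 := σ.injective h2
  have h4 : ((ν x : ℂˣ) : ℂ) = 1 := congrArg Subtype.val h3
  simpa using h4

lemma pushChar_prod {d : ℕ} (K : IntermediateField ℚ ℂ) (σ : K →+* ℂ) {n : ℕ}
    (χ : Fin n → (rootsOfUnity d κ →* ℂˣ)) (h : ∀ i x, ((χ i x : ℂˣ) : ℂ) ∈ K)
    (h' : ∀ x, (((∏ i, χ i) x : ℂˣ) : ℂ) ∈ K) :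
    (∏ i, pushChar K σ (χ i) (h i)) = pushChar K σ (∏ i, χ i) h' := by
  ext x
  rw [MonoidHom.finset_prod_apply, Units.coe_prod]
  show (∏ i, σ ⟨((χ i x : ℂˣ) : ℂ), h i x⟩ : ℂ) = σ ⟨(((∏ i, χ i) x : ℂˣ) : ℂ), h' x⟩
  rw [← map_prod σ]
  congr 1
  apply Subtype.ext
  show (((∏ i, (⟨((χ i x : ℂˣ) : ℂ), h i x⟩ : K)) : K) : ℂ) = (((∏ i, χ i) x : ℂˣ) : ℂ)
  rw [MonoidHom.finset_prod_apply, Units.coe_prod]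
  push_cast
  rfl



set_option synthInstance.maxHeartbeats 1000000 in
set_option maxHeartbeats 2000000 in
open IntermediateField in
/-- If none of `χ₁, …, χₙ` and `χ₁⋯χₙ` is trivial, then the Jacobi sum
`j(χ₁,…,χₙ)` is an algebraic number all of whose conjugates (complex roots of its minimal
polynomial over `ℚ`) have absolute value `q^((n-1)/2)`, i.e. it is a `q`-Weil number of
weight `n - 1`. -/
theorem jSum_isWeilNumber (d : ℕ) (hd0 : 0 < d) (hd : d ∣ Fintype.card κ - 1)
    {n : ℕ} (χ : Fin n → (rootsOfUnity d κ →* ℂˣ))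
    (h1 : ∀ i, χ i ≠ 1) (hprod : (∏ i, χ i) ≠ 1) :
    IsAlgebraic ℚ (jSum d hd χ) ∧
      ∀ z : ℂ, Polynomial.aeval z (minpoly ℚ (jSum d hd χ)) = 0 →
        ‖z‖ = (Fintype.card κ : ℝ) ^ (((n : ℝ) - 1) / 2) := by
  classical
  set S : Set ℂ := {c | ∃ i : Fin n, ∃ x : rootsOfUnity d κ, ((χ i x : ℂˣ) : ℂ) = c} with hS
  have hSint : ∀ c ∈ S, IsIntegral ℚ c := by
    rintro c ⟨i, x, rfl⟩
    exact char_val_isIntegral d hd0 (χ i) x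
  set K : IntermediateField ℚ ℂ := IntermediateField.adjoin ℚ S with hKdef
  haveI halg : Algebra.IsAlgebraic ℚ K := IntermediateField.isAlgebraic_adjoin hSint
  have hmem : ∀ (i : Fin n) (x : rootsOfUnity d κ), ((χ i x : ℂˣ) : ℂ) ∈ K :=
    fun i x => IntermediateField.subset_adjoin ℚ S ⟨i, x, rfl⟩
  set jK : K := (-1 : K) ^ (n - 1) *
    ∑ m ∈ Finset.univ.filter (fun m : Fin n → κˣ => (∑ i, (m i : κ)) = 1),
      ∏ i, (⟨((χ i (toMu d hd (m i)) : ℂˣ) : ℂ), hmem i (toMu d hd (m i))⟩ : K) with hjKdef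
  have key : ∀ f : K →+* ℂ, f jK = (-1 : ℂ) ^ (n - 1) *
      ∑ m ∈ Finset.univ.filter (fun m : Fin n → κˣ => (∑ i, (m i : κ)) = 1),
        ∏ i, f ⟨((χ i (toMu d hd (m i)) : ℂˣ) : ℂ), hmem i (toMu d hd (m i))⟩ := by
    intro f
    rw [hjKdef, map_mul, map_pow, map_neg, map_one, map_sum]
    congr 1
    refine Finset.sum_congr rfl fun m _ => ?_
    exact map_prod f _ _
  have hcoe : (jK : ℂ) = jSum d hd χ := by
    have h := key (algebraMap K ℂ)
    rw [show (algebraMap K ℂ) jK = (jK : ℂ) from rfl] at h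
    rw [h, jSum]
    rfl
  have halgj : IsAlgebraic ℚ (jSum d hd χ) := by
    rw [← hcoe]
    exact (isAlgebraic_algebraMap_iff (algebraMap K ℂ).injective).mpr
      (Algebra.IsAlgebraic.isAlgebraic jK)
  refine ⟨halgj, ?_⟩
  intro z hz
  have hminp : minpoly ℚ jK = minpoly ℚ (jSum d hd χ) := by
    rw [← hcoe]
    exact (minpoly.algebraMap_eq (algebraMap K ℂ).injective jK).symm
  have hy : Polynomial.aeval z (minpoly ℚ jK) = 0 := by rw [hminp]; exact hz
  have hK' : ∀ s : ↥K, IsIntegral ℚ s ∧ ((minpoly ℚ s).map (algebraMap ℚ ℂ)).Splits := fun s =>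
    ⟨(Algebra.IsAlgebraic.isAlgebraic s).isIntegral, IsAlgClosed.splits _⟩
  obtain ⟨σ, hσj⟩ := IntermediateField.exists_algHom_of_splits_of_aeval hK' hy
  set σ' : K →+* ℂ := σ.toRingHom with hσ'def
  set χ' : Fin n → (rootsOfUnity d κ →* ℂˣ) := fun i => pushChar K σ' (χ i) (hmem i) with hχ'
  have hσjS : σ' jK = jSum d hd χ' := by
    rw [key σ', jSum]
    rfl
  have h1' : ∀ i, χ' i ≠ 1 := fun i => pushChar_ne_one K σ' (hmem i) (h1 i)
  have hprodmem : ∀ x : rootsOfUnity d κ, (((∏ i, χ i) x : ℂˣ) : ℂ) ∈ K := by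
    intro x
    rw [MonoidHom.finset_prod_apply, Units.coe_prod]
    exact prod_mem (fun i _ => hmem i x)
  have hprod' : (∏ i, χ' i) ≠ 1 := by
    rw [hχ', pushChar_prod K σ' χ hmem hprodmem]
    exact pushChar_ne_one K σ' hprodmem hprod
  calc ‖z‖ = ‖jSum d hd χ'‖ := by
        rw [← hσj]
        exact congrArg (norm : ℂ → ℝ) hσjS
  _ = (Fintype.card κ : ℝ) ^ (((n : ℝ) - 1) / 2) := abs_jSum d hd0 hd χ' h1' hprod'

end MotivicGJ
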